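/- Let X be a set and h : X → ℝ a positive function with h̲ = inf_{x∈X} h(x) > 0 attained at a point x̲ ∈ X and h̄ = sup_{x∈X} h(x) < ∞ attained at a point x̄ ∈ X, and assume h̲ < h̄. Set ω = h̄/(h̄−h̲) − 1/(log h̄ − log h̲). Then ω ∈ (0,1), and for every design ξ with points x₁,…,x_k ∈ X and weights ξᵢ ≥ 0 summing to 1, I₁₂(ξ) = 1 + log(Σᵢ ξᵢ h(xᵢ)) − Σᵢ ξᵢ log h(xᵢ) ≤ 1 + log(ω·h̲ + (1−ω)·h̄) − (ω·log h̲ + (1−ω)·log h̄), i.e. the two-point design placing weight ω at x̲ and weight 1−ω at x̄ maximizes the KL-criterion over all finitely supported designs on X. -/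

import Mathlib

open scoped BigOperators

/-- The two-point design placing weight ω = h̄/(h̄-h̲) - 1/(log h̄ - log h̲) at a
minimizer of h and 1-ω at a maximizer maximizes the KL-criterion over all
finitely supported designs, and ω ∈ (0,1). -/
theorem stmt_7 (X : Type*) (h : X → ℝ) (hpos : ∀ x, 0 < h x)
    (xlo xhi : X) (hlo : ∀ x, h xlo ≤ h x) (hhi : ∀ x, h x ≤ h xhi)
    (hlt : h xlo < h xhi) :
    let ω : ℝ := h xhi / (h xhi - h xlo) - 1 / (Real.log (h xhi) - Real.log (h xlo))
    (0 < ω ∧ ω < 1) ∧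
    ∀ (k : ℕ) (x : Fin k → X) (w : Fin k → ℝ), (∀ i, 0 ≤ w i) → ∑ i, w i = 1 →
      1 + Real.log (∑ i, w i * h (x i)) - ∑ i, w i * Real.log (h (x i))
        ≤ 1 + Real.log (ω * h xlo + (1 - ω) * h xhi)
          - (ω * Real.log (h xlo) + (1 - ω) * Real.log (h xhi)) := by
  intro ω
  set a := h xlo with ha_def
  set b := h xhi with hb_def
  have ha : 0 < a := hpos xlo
  have hb : 0 < b := hpos xhi
  have hab : a < b := hlt
  have hba : 0 < b - a := by linarith
  have hL : 0 < Real.log b - Real.log a := by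
    have := Real.log_lt_log ha hab; linarith
  -- key elementary inequalities
  have h1 : Real.log (b / a) < b / a - 1 :=
    Real.log_lt_sub_one_of_pos (by positivity) (by
      intro hc
      have : b = a := by field_simp at hc; linarith
      linarith)
  have h2 : Real.log (a / b) < a / b - 1 :=
    Real.log_lt_sub_one_of_pos (by positivity) (by
      intro hc
      have : a = b := by field_simp at hc; linarith
      linarith)
  rw [Real.log_div (ne_of_gt hb) (ne_of_gt ha)] at h1
  rw [Real.log_div (ne_of_gt ha) (ne_of_gt hb)] at h2
  set L : ℝ := Real.log b - Real.log a with hLdef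
  have haL : a * L < b - a := by
    have := mul_lt_mul_of_pos_left h1 ha
    have e : a * (b / a - 1) = b - a := by field_simp
    rw [hLdef]; nlinarith
  have hbL : b - a < b * L := by
    have := mul_lt_mul_of_pos_left h2 hb
    have e : b * (a / b - 1) = a - b := by field_simp
    rw [hLdef]; nlinarith
  have hω0 : 0 < ω := by
    show 0 < b / (b - a) - 1 / L
    rw [sub_pos, div_lt_div_iff₀ hL hba]
    nlinarith
  have hω1 : ω < 1 := by
    show b / (b - a) - 1 / L < 1
    have e : b / (b - a) - 1 = a / (b - a) := by field_simp; ring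
    have h3 : a / (b - a) < 1 / L := by
      rw [div_lt_div_iff₀ hba hL]; nlinarith
    linarith
  refine ⟨⟨hω0, hω1⟩, ?_⟩
  intro k x w hw hsum
  set s : ℝ := L / (b - a) with hsdef
  have hs : 0 < s := by positivity
  set M : ℝ := (b - a) / L with hMdef
  have hM : 0 < M := by positivity
  have hsM : s * M = 1 := by rw [hsdef, hMdef]; field_simp
  -- the two-point design has mean M
  have hmean : ω * a + (1 - ω) * b = M := by
    show (b / (b - a) - 1 / L) * a + (1 - (b / (b - a) - 1 / L)) * b = (b - a) / L
    field_simp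
    ring
  clear_value ω
  -- chord inequality from concavity of log
  have chord : ∀ t : ℝ, a ≤ t → t ≤ b → Real.log a + s * (t - a) ≤ Real.log t := by
    intro t hta htb
    have hμ : (0:ℝ) ≤ (b - t) / (b - a) := div_nonneg (by linarith) hba.le
    have hν : (0:ℝ) ≤ (t - a) / (b - a) := div_nonneg (by linarith) hba.le
    have hμν : (b - t) / (b - a) + (t - a) / (b - a) = 1 := by
      field_simp; ring
    have hc := strictConcaveOn_log_Ioi.concaveOn.2 (Set.mem_Ioi.mpr ha)
      (Set.mem_Ioi.mpr hb) hμ hν hμν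
    have e1 : ((b - t) / (b - a)) • a + ((t - a) / (b - a)) • b = t := by
      simp only [smul_eq_mul]; field_simp; ring
    rw [e1] at hc
    simp only [smul_eq_mul] at hc
    have e2 : (b - t) / (b - a) * Real.log a + (t - a) / (b - a) * Real.log b
        = Real.log a + s * (t - a) := by
      rw [hsdef, hLdef]; field_simp; ring
    linarith [e2 ▸ hc]
  set m : ℝ := ∑ i, w i * h (x i) with hm_def
  have hma : a ≤ m := by
    calc a = ∑ i, w i * a := by rw [← Finset.sum_mul, hsum, one_mul]
    _ ≤ m := Finset.sum_le_sum fun i _ => by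
        exact mul_le_mul_of_nonneg_left (hlo (x i)) (hw i)
  have hmpos : 0 < m := lt_of_lt_of_le ha hma
  -- log m ≤ log M + s * (m - M)
  have hlogm : Real.log m ≤ Real.log M + s * (m - M) := by
    have h4 := Real.log_le_sub_one_of_pos (show 0 < m / M by positivity)
    rw [Real.log_div (ne_of_gt hmpos) (ne_of_gt hM)] at h4
    have e : m / M = s * m := by
      rw [hsdef, hMdef]; field_simp
    rw [e] at h4
    nlinarith
  -- lower bound on the weighted sum of logs
  have hsumlog : Real.log a + s * (m - a) ≤ ∑ i, w i * Real.log (h (x i)) := by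
    have step : ∀ i : Fin k, w i * (Real.log a + s * (h (x i) - a)) ≤ w i * Real.log (h (x i)) :=
      fun i => mul_le_mul_of_nonneg_left (chord (h (x i)) (hlo (x i)) (hhi (x i))) (hw i)
    calc Real.log a + s * (m - a)
        = (∑ i, w i) * (Real.log a - s * a) + s * ∑ i, w i * h (x i) := by
          rw [hsum, hm_def]; ring
      _ = ∑ i, w i * (Real.log a + s * (h (x i) - a)) := by
          rw [Finset.sum_mul, Finset.mul_sum, ← Finset.sum_add_distrib]
          exact Finset.sum_congr rfl fun i _ => by ring
      _ ≤ ∑ i, w i * Real.log (h (x i)) := Finset.sum_le_sum fun i _ => step i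
  -- RHS equals 1 + log M - (log a + s * (M - a))
  have hrhs : Real.log (ω * a + (1 - ω) * b) - (ω * Real.log a + (1 - ω) * Real.log b)
      = Real.log M - (Real.log a + s * (M - a)) := by
    rw [hmean]
    have e1 : M - a = (1 - ω) * (b - a) := by linear_combination -hmean
    have e2 : s * (M - a) = (1 - ω) * L := by
      rw [e1, hsdef]; field_simp
    rw [e2, hLdef]; ring
  show 1 + Real.log m - ∑ i, w i * Real.log (h (x i))
      ≤ 1 + Real.log (ω * a + (1 - ω) * b) - (ω * Real.log a + (1 - ω) * Real.log b)
  linarith [hrhs]
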